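/- Let X and Y be uniformly discrete metric spaces, F : X → Y a bi-Lipschitz bijection with constant C, and G a group acting translation-like on X. Equip Y with the induced action g·y = F(g·F⁻¹(y)). Then F descends to a bijection F̄ : X/G → Y/G satisfying (1/C) d_{X/G}([x],[y]) ≤ d_{Y/G}([F(x)],[F(y)]) ≤ C d_{X/G}([x],[y]); in particular X/G and Y/G are bi-Lipschitz. -/

import Mathlib

/-- A translation-like (right) action of a group `K` on a metric space `X`. -/
def RightTranslationLike {K X : Type*} [Group K] [MetricSpace X]
    (α : K → X → X) : Prop :=
  (∀ x, α 1 x = x) ∧ (∀ k₁ k₂ x, α (k₁ * k₂) x = α k₂ (α k₁ x)) ∧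
  (∀ k x, α k x = x → k = 1) ∧ ∀ k, ∃ C : ℝ, ∀ x, dist x (α k x) ≤ C

/-- A chain from `x` to `y` relative to the action `α`. -/
def IsChainFrom {K X : Type*} (α : K → X → X) (x y : X)
    (l : List (X × X)) : Prop :=
  (l.map Prod.fst).head? = some x ∧ (l.map Prod.snd).getLast? = some y ∧
  l.Chain' (fun p q => ∃ k : K, α k p.2 = q.1)

/-- The chain distance on the orbit space. -/
noncomputable def chainDist {K X : Type*} [MetricSpace X] (α : K → X → X)
    (x y : X) : ℝ :=
  sInf {s : ℝ | ∃ l : List (X × X), IsChainFrom α x y l ∧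
    s = (l.map fun p => dist p.1 p.2).sum}


private lemma chain_map' {K X Y : Type*} (α : K → X → X) (β : K → Y → Y)
    (f : X → Y) (hf : ∀ k x, f (α k x) = β k (f x)) {x y : X} {l : List (X × X)}
    (h : IsChainFrom α x y l) :
    IsChainFrom β (f x) (f y) (l.map (Prod.map f f)) := by
  obtain ⟨h1, h2, h3⟩ := h
  refine ⟨?_, ?_, ?_⟩
  · rw [List.map_map, show (Prod.fst ∘ Prod.map f f) = f ∘ Prod.fst from rfl,
      ← List.map_map, List.head?_map, h1]; rfl
  · rw [List.map_map, show (Prod.snd ∘ Prod.map f f) = f ∘ Prod.snd from rfl,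
      ← List.map_map, List.getLast?_map, h2]; rfl
  · simp only [List.Chain'] at h3 ⊢; rw [List.isChain_map]
    refine h3.imp ?_
    rintro p q ⟨k, hk⟩
    exact ⟨k, by simp [Prod.map, ← hk, hf]⟩

private lemma single_chain {K X : Type*} (α : K → X → X) (x y : X) :
    IsChainFrom α x y [(x, y)] := by
  refine ⟨rfl, rfl, ?_⟩
  simp [List.Chain', List.isChain_singleton]

/-- If `X`, `Y` are uniformly discrete, `F : X → Y` is a
`C`-bi-Lipschitz bijection and `G` acts translation-like on `X`, then with the
induced action `g·y = F (g · F⁻¹ y)` on `Y`, `F` maps `G`-orbits to `G`-orbits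
(hence descends to a bijection `X/G → Y/G`) and
`(1/C) d_{X/G} ≤ d_{Y/G} ∘ F̄ ≤ C d_{X/G}`; in particular `X/G` and `Y/G` are
bi-Lipschitz. -/
theorem quotient_biLipschitz_of_biLipschitz_space
    {G X Y : Type*} [Group G] [MetricSpace X] [MetricSpace Y]
    (hudX : ∃ ε > (0 : ℝ), ∀ x y : X, x ≠ y → ε ≤ dist x y)
    (hudY : ∃ ε > (0 : ℝ), ∀ x y : Y, x ≠ y → ε ≤ dist x y)
    (F : X ≃ Y) (C : ℝ) (hC : 1 ≤ C)
    (hbil : ∀ x y : X, dist x y / C ≤ dist (F x) (F y) ∧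
      dist (F x) (F y) ≤ C * dist x y)
    (α : G → X → X) (hα : RightTranslationLike α) :
    (∀ x y : X, (∃ g, α g x = y) ↔
      (∃ g, F (α g (F.symm (F x))) = F y)) ∧
    (∀ x y : X,
      chainDist α x y / C ≤
        chainDist (fun (g : G) (z : Y) => F (α g (F.symm z))) (F x) (F y) ∧
      chainDist (fun (g : G) (z : Y) => F (α g (F.symm z))) (F x) (F y) ≤
        C * chainDist α x y) := by
  set β : G → Y → Y := fun g z => F (α g (F.symm z)) with hβ
  have hfXY : ∀ (k : G) (x : X), F (α k x) = β k (F x) := by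
    intro k x; simp [hβ]
  have hfYX : ∀ (k : G) (y : Y), F.symm (β k y) = α k (F.symm y) := by
    intro k y; simp [hβ]
  have hC0 : (0 : ℝ) < C := lt_of_lt_of_le one_pos hC
  constructor
  · intro x y
    simp [F.apply_eq_iff_eq]
  · intro x y
    set S : Set ℝ := {s : ℝ | ∃ l : List (X × X), IsChainFrom α x y l ∧
      s = (l.map fun p => dist p.1 p.2).sum} with hS
    set T : Set ℝ := {s : ℝ | ∃ l : List (Y × Y), IsChainFrom β (F x) (F y) l ∧
      s = (l.map fun p => dist p.1 p.2).sum} with hT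
    have hSne : S.Nonempty := ⟨dist x y, [(x, y)], single_chain α x y, by simp⟩
    have hTne : T.Nonempty :=
      ⟨dist (F x) (F y), [(F x, F y)], single_chain β (F x) (F y), by simp⟩
    have hSbdd : BddBelow S := by
      refine ⟨0, ?_⟩
      rintro s ⟨l, -, rfl⟩
      refine List.sum_nonneg fun a ha => ?_
      obtain ⟨p, -, rfl⟩ := List.mem_map.mp ha
      exact dist_nonneg
    have hTbdd : BddBelow T := by
      refine ⟨0, ?_⟩
      rintro s ⟨l, -, rfl⟩
      refine List.sum_nonneg fun a ha => ?_
      obtain ⟨p, -, rfl⟩ := List.mem_map.mp ha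
      exact dist_nonneg
    -- forward: each chain in X gives chain in Y with sum ≤ C * sum
    have hfor : ∀ s ∈ S, sInf T ≤ C * s := by
      rintro s ⟨l, hl, rfl⟩
      have hmem : ((l.map (Prod.map F F)).map fun p => dist p.1 p.2).sum ∈ T :=
        ⟨l.map (Prod.map F F), chain_map' α β F hfXY hl, rfl⟩
      refine le_trans (csInf_le hTbdd hmem) ?_
      rw [List.map_map]
      have : ((l.map fun p => C * dist p.1 p.2).sum) =
          C * (l.map fun p => dist p.1 p.2).sum := by
        rw [← List.sum_map_mul_left]
      rw [← this]
      refine List.sum_le_sum ?_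
      intro p _
      exact (hbil p.1 p.2).2
    have hback : ∀ t ∈ T, sInf S ≤ C * t := by
      rintro t ⟨l, hl, rfl⟩
      have hl' := chain_map' β α F.symm hfYX hl
      rw [F.symm_apply_apply, F.symm_apply_apply] at hl'
      have hmem : ((l.map (Prod.map F.symm F.symm)).map fun p => dist p.1 p.2).sum ∈ S :=
        ⟨l.map (Prod.map F.symm F.symm), hl', rfl⟩
      refine le_trans (csInf_le hSbdd hmem) ?_
      rw [List.map_map]
      have : ((l.map fun p => C * dist p.1 p.2).sum) =
          C * (l.map fun p => dist p.1 p.2).sum := by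
        rw [← List.sum_map_mul_left]
      rw [← this]
      refine List.sum_le_sum ?_
      intro p _
      have := (hbil (F.symm p.1) (F.symm p.2)).1
      rw [F.apply_symm_apply, F.apply_symm_apply] at this
      exact (div_le_iff₀' hC0).mp this
    constructor
    · rw [chainDist, chainDist, ← hS, ← hT]
      apply le_csInf hTne
      intro t ht
      exact (div_le_iff₀' hC0).mpr (hback t ht)
    · have h1 : chainDist β (F x) (F y) ≤ C * chainDist α x y := by
        rw [chainDist, chainDist, ← hS, ← hT]
        have : sInf T / C ≤ sInf S := by
          apply le_csInf hSne
          intro s hs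
          exact (div_le_iff₀' hC0).mpr (hfor s hs)
        linarith [(div_le_iff₀' hC0).mp this]
      exact h1
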